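/- arXiv:1408.5951 — 6 statements merged into one kernel-verified Lean document; each statement's English description precedes it below -/
import Mathlib

section
/- Let f(x) = r̄(x)(1-p(x)) - k·p(x) where r̄ is twice continuously differentiable, decreasing, concave, and positive on an open interval I ⊆ (0,1), p is twice continuously differentiable, convex, strictly increasing on I, k ≥ 0, and suppose f(x) > 0 and f'(x) < 0 for all x ∈ I. Define g(x) = -α·f(x)/f'(x) for a fixed α ∈ (0,1]. Then g is strictly decreasing on I. -/
open Set Filter

private lemma aux_deriv_nonneg {s : Set ℝ} (hs : IsOpen s) {h : ℝ → ℝ} {x : ℝ}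
    (hx : x ∈ s) (hm : MonotoneOn h s) (hd : DifferentiableAt ℝ h x) :
    0 ≤ deriv h x := by
  have ht : Filter.Tendsto (slope h x) (nhdsWithin x {x}ᶜ) (nhds (deriv h x)) :=
    hasDerivAt_iff_tendsto_slope.1 hd.hasDerivAt
  refine ge_of_tendsto ht ?_
  have hmem : s ∈ nhdsWithin x ({x}ᶜ : Set ℝ) :=
    nhdsWithin_le_nhds (hs.mem_nhds hx)
  filter_upwards [hmem, self_mem_nhdsWithin] with y hy hy'
  have hne : y ≠ x := hy'
  rcases lt_or_gt_of_ne hne with hlt | hgt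
  · rw [slope_def_field]
    have h1 : h y ≤ h x := hm hy hx hlt.le
    have h2 : y - x < 0 := by linarith
    exact div_nonneg_iff.mpr (Or.inr ⟨by linarith, h2.le⟩)
  · rw [slope_def_field]
    have h1 : h x ≤ h y := hm hx hy hgt.le
    have h2 : (0:ℝ) < y - x := by linarith
    exact div_nonneg (by linarith) h2.le

private lemma aux_deriv_nonpos {s : Set ℝ} (hs : IsOpen s) {h : ℝ → ℝ} {x : ℝ}
    (hx : x ∈ s) (hm : AntitoneOn h s) (hd : DifferentiableAt ℝ h x) :
    deriv h x ≤ 0 := by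
  have hm' : MonotoneOn (fun y => -h y) s := fun u hu v hv huv => by
    simpa using hm hu hv huv
  have hd' : DifferentiableAt ℝ (fun y => -h y) x := hd.neg
  have := aux_deriv_nonneg hs hx hm' hd'
  rw [deriv.fun_neg] at this
  linarith

theorem stmt2 (r p f g : ℝ → ℝ) (k α a b : ℝ)
    (hI : Set.Ioo a b ⊆ Set.Ioo (0:ℝ) 1)
    (hr_diff : ContDiffOn ℝ 2 r (Set.Ioo a b))
    (hr_anti : AntitoneOn r (Set.Ioo a b))
    (hr_conc : ConcaveOn ℝ (Set.Ioo a b) r)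
    (hr_pos : ∀ x ∈ Set.Ioo a b, 0 < r x)
    (hp_diff : ContDiffOn ℝ 2 p (Set.Ioo a b))
    (hp_conv : ConvexOn ℝ (Set.Ioo a b) p)
    (hp_mono : StrictMonoOn p (Set.Ioo a b))
    (hk : 0 ≤ k)
    (hα : α ∈ Set.Ioc (0:ℝ) 1)
    (hf : ∀ x, f x = r x * (1 - p x) - k * p x)
    (hfpos : ∀ x ∈ Set.Ioo a b, 0 < f x)
    (hf' : ∀ x ∈ Set.Ioo a b, deriv f x < 0)
    (hg : ∀ x, g x = -α * f x / deriv f x) :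
    StrictAntiOn g (Set.Ioo a b) := by
  set s : Set ℝ := Set.Ioo a b with hs_def
  have hso : IsOpen s := isOpen_Ioo
  -- differentiability of r and p on s
  have hr_d1 : ∀ x ∈ s, DifferentiableAt ℝ r x := fun x hx =>
    (hr_diff.differentiableOn (by norm_num)).differentiableAt (hso.mem_nhds hx)
  have hp_d1 : ∀ x ∈ s, DifferentiableAt ℝ p x := fun x hx =>
    (hp_diff.differentiableOn (by norm_num)).differentiableAt (hso.mem_nhds hx)
  have hr_cd : ContDiffOn ℝ 1 (deriv r) s := hr_diff.deriv_of_isOpen hso (by norm_num)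
  have hp_cd : ContDiffOn ℝ 1 (deriv p) s := hp_diff.deriv_of_isOpen hso (by norm_num)
  have hr_d2 : ∀ x ∈ s, DifferentiableAt ℝ (deriv r) x := fun x hx =>
    (hr_cd.differentiableOn (by norm_num)).differentiableAt (hso.mem_nhds hx)
  have hp_d2 : ∀ x ∈ s, DifferentiableAt ℝ (deriv p) x := fun x hx =>
    (hp_cd.differentiableOn (by norm_num)).differentiableAt (hso.mem_nhds hx)
  -- sign facts
  have hr1 : ∀ x ∈ s, deriv r x ≤ 0 := fun x hx =>
    aux_deriv_nonpos hso hx hr_anti (hr_d1 x hx)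
  have hp1 : ∀ x ∈ s, 0 ≤ deriv p x := fun x hx =>
    aux_deriv_nonneg hso hx hp_mono.monotoneOn (hp_d1 x hx)
  have hr2 : ∀ x ∈ s, deriv (deriv r) x ≤ 0 := fun x hx =>
    aux_deriv_nonpos hso hx (hr_conc.antitoneOn_deriv hr_d1) (hr_d2 x hx)
  have hp2 : ∀ x ∈ s, 0 ≤ deriv (deriv p) x := fun x hx =>
    aux_deriv_nonneg hso hx (hp_conv.monotoneOn_deriv hp_d1) (hp_d2 x hx)
  -- 1 - p x > 0 on s
  have hq : ∀ x ∈ s, 0 < 1 - p x := by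
    intro x hx
    by_contra hcon
    push_neg at hcon
    have h1 : 1 ≤ p x := by linarith
    have h2 : 0 ≤ k * p x := mul_nonneg hk (by linarith)
    have h3 : r x * (1 - p x) ≤ 0 :=
      mul_nonpos_of_nonneg_of_nonpos (hr_pos x hx).le (by linarith)
    have := hfpos x hx
    rw [hf x] at this
    linarith
  -- first derivative of f
  have hfd : ∀ x ∈ s, HasDerivAt f
      (deriv r x * (1 - p x) - (r x + k) * deriv p x) x := by
    intro x hx
    have hr' := (hr_d1 x hx).hasDerivAt
    have hp' := (hp_d1 x hx).hasDerivAt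
    have h1 : HasDerivAt (fun y => r y * (1 - p y) - k * p y)
        (deriv r x * (1 - p x) + r x * (0 - deriv p x) - k * deriv p x) x :=
      (hr'.mul ((hasDerivAt_const x (1:ℝ)).sub hp')).sub (hp'.const_mul k)
    have hfe : f = fun y => r y * (1 - p y) - k * p y := funext hf
    rw [hfe]
    convert h1 using 1
    ring
  have hfd' : ∀ x ∈ s, deriv f x = deriv r x * (1 - p x) - (r x + k) * deriv p x :=
    fun x hx => (hfd x hx).deriv
  -- second derivative of f
  set φ : ℝ → ℝ := fun y => deriv r y * (1 - p y) - (r y + k) * deriv p y with hφ_def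
  have hφeq : ∀ x ∈ s, deriv f =ᶠ[nhds x] φ := by
    intro x hx
    filter_upwards [hso.mem_nhds hx] with y hy using hfd' y hy
  have hφd : ∀ x ∈ s, HasDerivAt φ
      (deriv (deriv r) x * (1 - p x) - 2 * deriv r x * deriv p x
        - (r x + k) * deriv (deriv p) x) x := by
    intro x hx
    have hr' := (hr_d1 x hx).hasDerivAt
    have hp' := (hp_d1 x hx).hasDerivAt
    have hr'' := (hr_d2 x hx).hasDerivAt
    have hp'' := (hp_d2 x hx).hasDerivAt
    have h1 : HasDerivAt φ
        (deriv (deriv r) x * (1 - p x) + deriv r x * (0 - deriv p x)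
          - (deriv r x * deriv p x + (r x + k) * deriv (deriv p) x)) x :=
      (hr''.mul ((hasDerivAt_const x (1:ℝ)).sub hp')).sub
        ((hr'.add_const k).mul hp'')
    convert h1 using 1
    ring
  have hf2d : ∀ x ∈ s, HasDerivAt (deriv f)
      (deriv (deriv r) x * (1 - p x) - 2 * deriv r x * deriv p x
        - (r x + k) * deriv (deriv p) x) x := by
    intro x hx
    exact (hφd x hx).congr_of_eventuallyEq (hφeq x hx)
  -- derivative of g and its negativity
  have hgd : ∀ x ∈ s, HasDerivAt g
      ((-α * deriv f x * deriv f x - -α * f x *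
        (deriv (deriv r) x * (1 - p x) - 2 * deriv r x * deriv p x
          - (r x + k) * deriv (deriv p) x)) / (deriv f x)^2) x := by
    intro x hx
    have hne : deriv f x ≠ 0 := (hf' x hx).ne
    have h1 := (((hfd x hx).const_mul (-α)).div (hf2d x hx) hne)
    have hge : g = fun y => -α * f y / deriv f y := funext hg
    rw [hge]
    rw [← hfd' x hx] at h1
    exact h1
  have hkey : ∀ x ∈ s,
      (deriv f x)^2 - f x *
        (deriv (deriv r) x * (1 - p x) - 2 * deriv r x * deriv p x
          - (r x + k) * deriv (deriv p) x) > 0 := by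
    intro x hx
    have hq' := hq x hx
    have hr0 := hr_pos x hx
    have hr1' := hr1 x hx
    have hp1' := hp1 x hx
    have hr2' := hr2 x hx
    have hp2' := hp2 x hx
    have hF := hfpos x hx
    have hF' := hf' x hx
    rw [hf x] at hF
    rw [hfd' x hx] at hF'
    rw [hfd' x hx, hf x]
    set r0 := r x; set p0 := p x; set r1 := deriv r x; set p1 := deriv p x
    set r2 := deriv (deriv r) x; set p2 := deriv (deriv p) x
    nlinarith [sq_nonneg (r1 * (1 - p0) + (r0 + k) * p1),
      sq_nonneg (r1 * (1 - p0) - (r0 + k) * p1),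
      mul_pos (neg_pos.mpr hF') (neg_pos.mpr hF'),
      mul_nonneg (mul_nonneg hk (neg_nonneg.mpr hr1')) hp1',
      mul_nonneg (mul_nonneg hF.le (neg_nonneg.mpr hr2')) hq'.le,
      mul_nonneg (mul_nonneg hF.le (by linarith : (0:ℝ) ≤ r0 + k)) hp2']
  have hgneg : ∀ x ∈ s, deriv g x < 0 := by
    intro x hx
    rw [(hgd x hx).deriv]
    have hα0 : 0 < α := hα.1
    have hne : (0:ℝ) < (deriv f x)^2 := pow_two_pos_of_ne_zero (hf' x hx).ne
    apply div_neg_of_neg_of_pos _ hne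
    have := hkey x hx
    nlinarith
  refine strictAntiOn_of_deriv_neg (convex_Ioo a b) ?_ ?_
  · exact fun x hx => ((hgd x hx).differentiableAt.continuousAt).continuousWithinAt
  · rwa [interior_Ioo]
end

section
/- Let f:[0,1]→ℝ be continuous with f(x) > 0 and g(x) = -α f(x)/f'(x) strictly decreasing and positive on an interval I = (a, ȳ) where f(ȳ) = 0, and for each n let x_n ∈ I satisfy x_n = n·g(x_n). Then x_n → ȳ as n → ∞. -/
theorem stmt5 (f g : ℝ → ℝ) (α a ybar : ℝ) (x : ℕ → ℝ)
    (hcont : ContinuousOn f (Set.Icc 0 1))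
    (hI : Set.Ioo a ybar ⊆ Set.Icc (0:ℝ) 1)
    (hfpos : ∀ y ∈ Set.Ioo a ybar, 0 < f y)
    (hg : ∀ y, g y = -α * f y / deriv f y)
    (hg_anti : StrictAntiOn g (Set.Ioo a ybar))
    (hg_pos : ∀ y ∈ Set.Ioo a ybar, 0 < g y)
    (hybar : f ybar = 0)
    (hx : ∀ n : ℕ, 1 ≤ n → x n ∈ Set.Ioo a ybar ∧ x n = (n : ℝ) * g (x n)) :
    Filter.Tendsto x Filter.atTop (nhds ybar) := by
  have hx1 := hx 1 le_rfl
  have hab : a < ybar := lt_trans (hx1.1).1 (hx1.1).2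
  rw [Metric.tendsto_atTop]
  intro ε hε
  set m := max a (ybar - ε) with hm
  set c := (m + ybar) / 2 with hc
  have hmlt : m < ybar := max_lt hab (by linarith)
  have ham : a ≤ m := le_max_left _ _
  have hca : a < c := by rw [hc]; linarith
  have hcy : c < ybar := by rw [hc]; linarith
  have hcI : c ∈ Set.Ioo a ybar := ⟨hca, hcy⟩
  have hgc : 0 < g c := hg_pos c hcI
  obtain ⟨N0, hN0⟩ := exists_nat_ge (ybar / g c)
  refine ⟨max 1 N0, fun n hn => ?_⟩
  have hn1 : 1 ≤ n := le_trans (le_max_left _ _) hn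
  obtain ⟨hxI, hxeq⟩ := hx n hn1
  have hxgt : c < x n := by
    by_contra hle
    push_neg at hle
    have hgge : g c ≤ g (x n) := by
      rcases eq_or_lt_of_le hle with h | h
      · rw [h]
      · exact (hg_anti hxI hcI h).le
    have hnN : (N0 : ℝ) ≤ n := by exact_mod_cast le_trans (le_max_right _ _) hn
    have h1 : ybar ≤ (N0:ℝ) * g c := by
      rw [div_le_iff₀ hgc] at hN0; linarith
    have h2 : ybar ≤ (n:ℝ) * g c := by nlinarith
    have hnpos : (0:ℝ) ≤ n := Nat.cast_nonneg n
    have h3 : (n:ℝ) * g c ≤ (n:ℝ) * g (x n) := by nlinarith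
    have : ybar ≤ x n := by rw [hxeq]; linarith
    linarith [hxI.2]
  have hym : ybar - ε ≤ m := le_max_right _ _
  rw [Real.dist_eq, abs_lt]
  constructor
  · rw [hc] at hxgt; linarith
  · linarith [hxI.2, hε]
end

section
/- Let p:[0,1]→[0,1] be convex, strictly increasing, differentiable, with p(1)=1, let α ∈ (0,1], k ≥ 0, a ≤ 0, b > 0 with a·x+b > 0 on [0,1]. Define f(x) = (a·x+b)(1-p(x)) - k·p(x). Let x₀ ∈ (0,1) satisfy x₀·f'(x₀) + α·f(x₀) = 0 with f(x₀) > 0 (the single-player optimality condition), and let ȳ satisfy f(ȳ) = 0 with f > 0 on [x₀, ȳ). Then ȳ < x₀·(1 + 2/α). -/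
theorem stmt6 (p f : ℝ → ℝ) (α k a b x₀ ybar : ℝ)
    (hp_conv : ConvexOn ℝ (Set.Icc 0 1) p)
    (hp_mono : StrictMonoOn p (Set.Icc 0 1))
    (hp_diff : ∀ x ∈ Set.Icc (0:ℝ) 1, DifferentiableAt ℝ p x)
    (hp_range : ∀ x ∈ Set.Icc (0:ℝ) 1, p x ∈ Set.Icc (0:ℝ) 1)
    (hp1 : p 1 = 1)
    (hα : α ∈ Set.Ioc (0:ℝ) 1) (hk : 0 ≤ k) (ha : a ≤ 0) (hb : 0 < b)
    (hab : ∀ x ∈ Set.Icc (0:ℝ) 1, 0 < a * x + b)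
    (hf : ∀ x, f x = (a * x + b) * (1 - p x) - k * p x)
    (hx₀ : x₀ ∈ Set.Ioo (0:ℝ) 1)
    (hfoc : x₀ * deriv f x₀ + α * f x₀ = 0)
    (hfx₀ : 0 < f x₀)
    (hybar_mem : ybar ∈ Set.Ioc x₀ 1)
    (hybar : f ybar = 0)
    (hfpos : ∀ x ∈ Set.Ico x₀ ybar, 0 < f x) :
    ybar < x₀ * (1 + 2 / α) := by
  obtain ⟨hx0, hx1⟩ := hx₀
  obtain ⟨hxy, hy1⟩ := hybar_mem
  obtain ⟨hα0, hα1⟩ := hα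
  have hxmem : x₀ ∈ Set.Icc (0:ℝ) 1 := ⟨hx0.le, hx1.le⟩
  have hymem : ybar ∈ Set.Icc (0:ℝ) 1 := ⟨(hx0.trans hxy).le, hy1⟩
  set p' := deriv p x₀ with hp'
  -- derivative of f at x₀
  have hpd : HasDerivAt p p' x₀ := (hp_diff x₀ hxmem).hasDerivAt
  have hfd : HasDerivAt f (a * (1 - p x₀) + (a * x₀ + b) * (0 - p') - k * p') x₀ := by
    have h1 : HasDerivAt (fun x => a * x + b) a x₀ := by
      simpa using ((hasDerivAt_id x₀).const_mul a).add_const b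
    have h2 : HasDerivAt (fun x => 1 - p x) (0 - p') x₀ :=
      (hasDerivAt_const x₀ 1).sub hpd
    have h3 : HasDerivAt (fun x => (a * x + b) * (1 - p x)) (a * (1 - p x₀) + (a * x₀ + b) * (0 - p')) x₀ :=
      h1.mul h2
    have h4 := h3.sub (hpd.const_mul k)
    have : f = fun x => (a * x + b) * (1 - p x) - k * p x := funext hf
    rw [this]
    exact h4
  have hderiv : deriv f x₀ = a * (1 - p x₀) + (a * x₀ + b) * (0 - p') - k * p' := hfd.deriv
  -- notation
  set q₀ := 1 - p x₀ with hq₀def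
  set qy := 1 - p ybar with hqydef
  set g₀ := a * x₀ + b + k with hg₀def
  set gy := a * ybar + b + k with hgydef
  have hgy_pos : 0 < gy := lt_of_lt_of_le (hab ybar hymem) (by simp [hgydef]; linarith)
  have hg₀_pos : 0 < g₀ := lt_of_lt_of_le (hab x₀ hxmem) (by simp [hg₀def]; linarith)
  -- f x₀ = g₀ * q₀ - k, f ybar = gy * qy - k
  have hfx0eq : f x₀ = g₀ * q₀ - k := by rw [hf]; ring
  have hfyeq : gy * qy = k := by
    have := hybar; rw [hf] at this; simp only [hqydef, hgydef]; linarith [this]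
  -- q₀ > qy ≥ 0
  have hpmono : p x₀ < p ybar := hp_mono hxmem hymem hxy
  have hqy0 : 0 ≤ qy := by
    have := (hp_range ybar hymem).2; simp [hqydef]; linarith
  have hq0qy : qy < q₀ := by simp [hqydef, hq₀def]; linarith
  have hq₀pos : 0 < q₀ := lt_of_le_of_lt hqy0 hq0qy
  -- convexity: p' * (ybar - x₀) ≤ p ybar - p x₀ = q₀ - qy
  have hslope : p' ≤ slope p x₀ ybar :=
    hp_conv.deriv_le_slope hxmem hymem hxy (hp_diff x₀ hxmem)
  have hd : 0 < ybar - x₀ := by linarith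
  have hconv : p' * (ybar - x₀) ≤ q₀ - qy := by
    have : p' * (ybar - x₀) ≤ (p ybar - p x₀) / (ybar - x₀) * (ybar - x₀) := by
      rw [slope_def_field] at hslope
      exact mul_le_mul_of_nonneg_right hslope hd.le
    rw [div_mul_cancel₀ _ hd.ne'] at this
    simp only [hq₀def, hqydef]; linarith
  -- FOC rearranged: x₀ * g₀ * p' = α * f x₀ + x₀ * a * q₀
  have hfoc' : x₀ * g₀ * p' = α * f x₀ + x₀ * a * q₀ := by
    have h := hfoc
    rw [hderiv] at h
    simp only [hg₀def, hq₀def] at h ⊢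
    linear_combination -h
  -- bound 1: g₀ * (p' * (ybar - x₀)) ≤ f x₀
  have hb1 : g₀ * (p' * (ybar - x₀)) ≤ f x₀ := by
    have h1 : g₀ * (p' * (ybar - x₀)) ≤ g₀ * (q₀ - qy) :=
      mul_le_mul_of_nonneg_left hconv hg₀_pos.le
    have h2 : gy * qy ≤ g₀ * qy := by
      apply mul_le_mul_of_nonneg_right _ hqy0
      simp only [hgydef, hg₀def]; nlinarith
    have h1' : g₀ * (q₀ - qy) = g₀ * q₀ - g₀ * qy := by ring
    rw [hfx0eq]; linarith [hfyeq]
  -- bound 2: (-a) * (ybar - x₀) * q₀ < f x₀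
  have hb2 : (-a) * (ybar - x₀) * q₀ < f x₀ := by
    have hky : k < gy * q₀ := by
      calc k = gy * qy := hfyeq.symm
        _ < gy * q₀ := by exact mul_lt_mul_of_pos_left hq0qy hgy_pos
    have he : g₀ * q₀ - gy * q₀ = (-a) * (ybar - x₀) * q₀ := by
      simp only [hgydef, hg₀def]; ring
    rw [hfx0eq]; linarith
  -- combine
  have hkey : α * f x₀ * (ybar - x₀) < 2 * f x₀ * x₀ := by
    have e : α * f x₀ * (ybar - x₀)
        = x₀ * (g₀ * (p' * (ybar - x₀))) + x₀ * ((-a) * (ybar - x₀) * q₀) := by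
      linear_combination (x₀ - ybar) * hfoc'
    have h1 := mul_le_mul_of_nonneg_left hb1 hx0.le
    have h2 := mul_lt_mul_of_pos_left hb2 hx0
    have hfx : x₀ * f x₀ + x₀ * f x₀ = 2 * f x₀ * x₀ := by ring
    linarith
  have h2a : ybar - x₀ < 2 * x₀ / α := by
    rw [lt_div_iff₀ hα0]
    nlinarith
  have : x₀ * (1 + 2 / α) = x₀ + 2 * x₀ / α := by field_simp
  linarith
end

section
/- Let p:[0,1]→[0,1] be convex, strictly increasing, differentiable, with p(0)=0 and p(1)=1, let α ∈ (0,1], k ≥ 0, a ≥ 0, b > 0. Define f(x) = (a·x+b)(1-p(x)) - k·p(x). If x₀ ∈ (0,1) satisfies x₀·f'(x₀) + α·f(x₀) = 0 and x₀·(1+1/α) < 1, then f(x₀·(1+1/α)) ≤ 0. Consequently, if ȳ denotes the smallest zero of f exceeding x₀, then ȳ ≤ x₀·(1+1/α). -/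
theorem stmt11 (p f : ℝ → ℝ) (α k a b x₀ : ℝ)
    (hp_conv : ConvexOn ℝ (Set.Icc 0 1) p)
    (hp_mono : StrictMonoOn p (Set.Icc 0 1))
    (hp_diff : ∀ x ∈ Set.Icc (0:ℝ) 1, DifferentiableAt ℝ p x)
    (hp_range : ∀ x ∈ Set.Icc (0:ℝ) 1, p x ∈ Set.Icc (0:ℝ) 1)
    (hp0 : p 0 = 0) (hp1 : p 1 = 1)
    (hα : α ∈ Set.Ioc (0:ℝ) 1) (hk : 0 ≤ k) (ha : 0 ≤ a) (hb : 0 < b)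
    (hf : ∀ x, f x = (a * x + b) * (1 - p x) - k * p x)
    (hx₀ : x₀ ∈ Set.Ioo (0:ℝ) 1)
    (hfoc : x₀ * deriv f x₀ + α * f x₀ = 0)
    (hsmall : x₀ * (1 + 1 / α) < 1) :
    f (x₀ * (1 + 1 / α)) ≤ 0 ∧
      ∀ ybar, x₀ < ybar → f ybar = 0 → (∀ z, x₀ < z → f z = 0 → ybar ≤ z) →
        ybar ≤ x₀ * (1 + 1 / α) := by
  obtain ⟨hα0, hα1⟩ := hα
  obtain ⟨hx₀0, hx₀1⟩ := hx₀
  set y : ℝ := x₀ * (1 + 1 / α) with hy_def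
  have hinv : 0 < 1 / α := by positivity
  have hx₀y : x₀ < y := by
    have : x₀ * 1 < x₀ * (1 + 1 / α) := by
      apply mul_lt_mul_of_pos_left _ hx₀0
      linarith
    linarith [this]
  have hy1 : y < 1 := hsmall
  have hy0 : 0 < y := lt_trans hx₀0 hx₀y
  have hx₀mem : x₀ ∈ Set.Icc (0:ℝ) 1 := ⟨hx₀0.le, hx₀1.le⟩
  have hymem : y ∈ Set.Icc (0:ℝ) 1 := ⟨hy0.le, hy1.le⟩
  have h0mem : (0:ℝ) ∈ Set.Icc (0:ℝ) 1 := by constructor <;> norm_num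
  -- convexity of -f
  have hgconv : ConvexOn ℝ (Set.Icc 0 1) (fun x => -f x) := by
    have h1 : ConvexOn ℝ (Set.Icc 0 1) (fun x => (a * x + b + k) * (p x - 1)) := by
      refine ⟨convex_Icc 0 1, ?_⟩
      intro x hx z hz s t hs ht hst
      have hts : t = 1 - s := by linarith
      subst hts
      have hmem : s • x + (1 - s) • z ∈ Set.Icc (0:ℝ) 1 := (convex_Icc 0 1) hx hz hs ht hst
      have hpc := hp_conv.2 hx hz hs ht hst
      simp only [smul_eq_mul] at *
      have hU : 0 ≤ a * (s * x + (1 - s) * z) + b + k := by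
        have : 0 ≤ s * x + (1 - s) * z := hmem.1
        nlinarith
      have step1 : (a * (s * x + (1 - s) * z) + b + k) * (p (s * x + (1 - s) * z) - 1)
          ≤ (a * (s * x + (1 - s) * z) + b + k) * (s * (p x - 1) + (1 - s) * (p z - 1)) := by
        apply mul_le_mul_of_nonneg_left _ hU
        linarith
      have hprod : 0 ≤ (x - z) * (p x - p z) := by
        rcases lt_trichotomy x z with h | h | h
        · have := hp_mono hx hz h
          nlinarith
        · subst h; simp
        · have := hp_mono hz hx h
          nlinarith
      have hsame : 0 ≤ a * ((x - z) * (p x - p z)) := mul_nonneg ha hprod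
      have hid : s * ((a * x + b + k) * (p x - 1)) + (1 - s) * ((a * z + b + k) * (p z - 1))
          - (s * (a * x + b + k) + (1 - s) * (a * z + b + k))
            * (s * (p x - 1) + (1 - s) * (p z - 1))
          = s * (1 - s) * (a * ((x - z) * (p x - p z))) := by ring
      have hfin : (s * (a * x + b + k) + (1 - s) * (a * z + b + k))
            * (s * (p x - 1) + (1 - s) * (p z - 1))
          ≤ s * ((a * x + b + k) * (p x - 1)) + (1 - s) * ((a * z + b + k) * (p z - 1)) := by
        nlinarith [mul_nonneg (mul_nonneg hs ht) hsame]
      have hUeq : a * (s * x + (1 - s) * z) + b + k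
          = s * (a * x + b + k) + (1 - s) * (a * z + b + k) := by ring
      calc (a * (s * x + (1 - s) * z) + b + k) * (p (s * x + (1 - s) * z) - 1)
          ≤ (a * (s * x + (1 - s) * z) + b + k)
            * (s * (p x - 1) + (1 - s) * (p z - 1)) := step1
        _ = (s * (a * x + b + k) + (1 - s) * (a * z + b + k))
            * (s * (p x - 1) + (1 - s) * (p z - 1)) := by rw [hUeq]
        _ ≤ s * ((a * x + b + k) * (p x - 1))
            + (1 - s) * ((a * z + b + k) * (p z - 1)) := hfin
    have heq : (fun x => -f x) = (fun x => (a * x + b + k) * (p x - 1) + k) := by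
      funext x
      rw [hf x]; ring
    rw [heq]
    exact h1.add_const k
  -- differentiability of f on Icc 0 1
  have hfdiff : ∀ x ∈ Set.Icc (0:ℝ) 1, DifferentiableAt ℝ f x := by
    intro x hx
    have hfe : f = fun x => (a * x + b) * (1 - p x) - k * p x := funext hf
    rw [hfe]
    exact (((differentiableAt_id.const_mul a).add_const b).mul
      ((differentiableAt_const 1).sub (hp_diff x hx))).sub ((hp_diff x hx).const_mul k)
  have hgdiff : DifferentiableAt ℝ (fun x => -f x) x₀ := (hfdiff x₀ hx₀mem).neg
  have hgderiv : deriv (fun x => -f x) x₀ = -deriv f x₀ := by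
    simp [deriv.neg]
  -- f 0 = b
  have hf0 : f 0 = b := by rw [hf 0, hp0]; ring
  -- tangent at x₀ towards 0 : f x₀ > 0
  have h2 := hgconv.slope_le_deriv h0mem hx₀mem hx₀0 hgdiff
  rw [slope_def_field, hgderiv, sub_zero] at h2
  have hfx₀pos : 0 < f x₀ := by
    rw [div_le_iff₀ hx₀0] at h2
    simp only [hf0] at h2
    nlinarith [h2, hfoc, hb, hα0, hα1]
  -- tangent at x₀ towards y : f y ≤ 0
  have h1 := hgconv.deriv_le_slope hx₀mem hymem hx₀y hgdiff
  rw [slope_def_field, hgderiv] at h1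
  have hfy : f y ≤ 0 := by
    rw [le_div_iff₀ (by linarith : (0:ℝ) < y - x₀)] at h1
    have hyx : y - x₀ = x₀ / α := by
      rw [hy_def]; field_simp; ring
    rw [hyx] at h1
    have hkey : -deriv f x₀ * (x₀ / α) ≤ -f y - -f x₀ := h1
    have : α * (-deriv f x₀ * (x₀ / α)) = -(x₀ * deriv f x₀) := by
      field_simp
    nlinarith [mul_le_mul_of_nonneg_left hkey hα0.le, hfoc]
  refine ⟨hfy, ?_⟩
  intro ybar hxy hybar hmin
  rcases eq_or_lt_of_le hfy with heq | hlt
  · exact hmin y hx₀y heq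
  · -- IVT on [x₀, y]
    have hcont : ContinuousOn f (Set.Icc x₀ y) := by
      intro x hx
      exact (hfdiff x ⟨le_trans hx₀0.le hx.1, le_trans hx.2 hy1.le⟩).continuousAt.continuousWithinAt
    have h0mem' : (0:ℝ) ∈ Set.Icc (f y) (f x₀) := ⟨hlt.le, hfx₀pos.le⟩
    obtain ⟨z, hz, hfz⟩ := intermediate_value_Icc' hx₀y.le hcont h0mem'
    have hzx : x₀ < z := by
      rcases eq_or_lt_of_le hz.1 with h | h
      · exfalso; rw [← h] at hfz; linarith
      · exact h
    exact le_trans (hmin z hzx hfz) hz.2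
end

section
/- Let b > 0, k ≥ 0, α ∈ (0,1], γ ≥ 1, and n ≥ 1. The equation (x)^γ·(γ/n + α) = α·b^α/(b^α + k) has a unique solution x_n ∈ (0,1), and the ratio (x_n)^γ/(x_1)^γ equals (γ+α)/(α + γ/n); in particular this ratio is increasing in n and converges to 1 + γ/α as n → ∞. -/
theorem stmt12 (b k α γ : ℝ)
    (hb : 0 < b) (hk : 0 ≤ k) (hα : α ∈ Set.Ioc (0:ℝ) 1) (hγ : 1 ≤ γ) :
    (∀ n : ℕ, 1 ≤ n →
      ∃! x : ℝ, x ∈ Set.Ioo (0:ℝ) 1 ∧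
        x ^ γ * (γ / (n : ℝ) + α) = α * b ^ α / (b ^ α + k)) ∧
    (∀ n : ℕ, 1 ≤ n → ∀ xn x1 : ℝ,
      xn ∈ Set.Ioo (0:ℝ) 1 → x1 ∈ Set.Ioo (0:ℝ) 1 →
      xn ^ γ * (γ / (n : ℝ) + α) = α * b ^ α / (b ^ α + k) →
      x1 ^ γ * (γ / (1 : ℝ) + α) = α * b ^ α / (b ^ α + k) →
      xn ^ γ / x1 ^ γ = (γ + α) / (α + γ / (n : ℝ))) ∧
    MonotoneOn (fun n : ℕ => (γ + α) / (α + γ / (n : ℝ))) {n : ℕ | 1 ≤ n} ∧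
    Filter.Tendsto (fun n : ℕ => (γ + α) / (α + γ / (n : ℝ))) Filter.atTop
      (nhds (1 + γ / α)) := by
  obtain ⟨hα0, hα1⟩ := hα
  have hγ0 : (0:ℝ) < γ := lt_of_lt_of_le one_pos hγ
  have hγne : γ ≠ 0 := ne_of_gt hγ0
  have hbα : 0 < b ^ α := Real.rpow_pos_of_pos hb α
  have hden : 0 < b ^ α + k := by linarith
  set C : ℝ := α * b ^ α / (b ^ α + k) with hCdef
  have hC0 : 0 < C := by
    apply div_pos (mul_pos hα0 hbα) hden
  have hCα : C ≤ α := by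
    rw [hCdef, div_le_iff₀ hden]
    nlinarith
  refine ⟨?_, ?_, ?_, ?_⟩
  · intro n hn
    have hn0 : (0:ℝ) < (n:ℝ) := by exact_mod_cast Nat.pos_of_ne_zero (by omega)
    set A : ℝ := γ / (n:ℝ) + α with hAdef
    have hA0 : 0 < A := by positivity
    have hCA : C < A := by
      have h : 0 < γ / (n:ℝ) := by positivity
      rw [hAdef]; linarith
    set r : ℝ := C / A with hrdef
    have hr0 : 0 < r := div_pos hC0 hA0
    have hr1 : r < 1 := (div_lt_one hA0).mpr hCA
    refine ⟨r ^ γ⁻¹, ⟨⟨Real.rpow_pos_of_pos hr0 _,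
      Real.rpow_lt_one hr0.le hr1 (by positivity)⟩, ?_⟩, ?_⟩
    · rw [Real.rpow_inv_rpow hr0.le hγne, hrdef, div_mul_cancel₀ _ hA0.ne']
    · rintro y ⟨⟨hy0, hy1⟩, hy⟩
      have hyr : y ^ γ = r := by
        rw [hrdef, eq_div_iff hA0.ne']; exact hy
      calc y = (y ^ γ) ^ γ⁻¹ := (Real.rpow_rpow_inv hy0.le hγne).symm
        _ = r ^ γ⁻¹ := by rw [hyr]
  · intro n hn xn x1 hxn hx1 hen he1
    have hn0 : (0:ℝ) < (n:ℝ) := by exact_mod_cast Nat.pos_of_ne_zero (by omega)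
    have hA0 : (0:ℝ) < γ / (n:ℝ) + α := by positivity
    have hB0 : (0:ℝ) < γ / (1:ℝ) + α := by positivity
    have h1 : x1 ^ γ = C / (γ / (1:ℝ) + α) := by
      rw [eq_div_iff hB0.ne']; exact he1
    have h2 : xn ^ γ = C / (γ / (n:ℝ) + α) := by
      rw [eq_div_iff hA0.ne']; exact hen
    rw [h1, h2]
    rw [div_div_div_eq]
    rw [div_eq_div_iff (by positivity) (by positivity)]
    field_simp
    ring
  · intro m hm n hn hmn
    simp only [Set.mem_setOf_eq] at hm hn
    have hm0 : (0:ℝ) < (m:ℝ) := by exact_mod_cast Nat.pos_of_ne_zero (by omega)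
    have hn0 : (0:ℝ) < (n:ℝ) := by exact_mod_cast Nat.pos_of_ne_zero (by omega)
    have hmn' : (m:ℝ) ≤ (n:ℝ) := by exact_mod_cast hmn
    have : γ / (n:ℝ) ≤ γ / (m:ℝ) := by
      apply div_le_div_of_nonneg_left hγ0.le hm0 hmn'
    have hden2 : (0:ℝ) < α + γ / (n:ℝ) := by positivity
    apply div_le_div_of_nonneg_left (by linarith) hden2 (by linarith)
  · have h1 : Filter.Tendsto (fun n : ℕ => α + γ / (n:ℝ)) Filter.atTop (nhds α) := by
      have := Filter.Tendsto.const_div_atTop (tendsto_natCast_atTop_atTop (R := ℝ)) γ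
      simpa using Filter.Tendsto.const_add α this
    have h2 : Filter.Tendsto (fun n : ℕ => (γ + α) / (α + γ / (n:ℝ))) Filter.atTop
        (nhds ((γ + α) / α)) := tendsto_const_nhds.div h1 hα0.ne'
    convert h2 using 2
    field_simp
    ring
end

section
/- Let f:[0,1]→ℝ be differentiable, α ∈ (0,1], n ≥ 1, and consider the social welfare Ψ(x₁,…,x_n) = (Σᵢ xᵢ^α)·f(Σᵢ xᵢ) over nonnegative xᵢ. For a fixed total x_T > 0, the sum Σᵢ xᵢ^α subject to Σᵢ xᵢ = x_T, xᵢ ≥ 0, is maximized at xᵢ = x_T/n for all i (by concavity of t ↦ t^α). Moreover, at any interior critical point of Ψ with all xᵢ = x_T/n > 0, the total x_T satisfies x_T·f'(x_T) + α·f(x_T) = 0, the same equation as the single-player optimality condition. -/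
theorem stmt16 (f : ℝ → ℝ) (α xT : ℝ) (n : ℕ)
    (hf : Differentiable ℝ f)
    (hα : α ∈ Set.Ioc (0:ℝ) 1) (hn : 1 ≤ n) (hxT : 0 < xT) :
    (∀ x : Fin n → ℝ, (∀ i, 0 ≤ x i) → (∑ i, x i) = xT →
      ∑ i, (x i) ^ α ≤ (n : ℝ) * (xT / (n : ℝ)) ^ α) ∧
    ((deriv (fun t : ℝ =>
        (t ^ α + ((n : ℝ) - 1) * (xT / (n : ℝ)) ^ α) *
          f (t + ((n : ℝ) - 1) * (xT / (n : ℝ)))) (xT / (n : ℝ)) = 0) →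
      xT * deriv f xT + α * f xT = 0) := by
  have hn0 : (0:ℝ) < (n:ℝ) := by exact_mod_cast hn
  have ht0 : 0 < xT / (n:ℝ) := div_pos hxT hn0
  set t₀ := xT / (n:ℝ) with ht₀def
  constructor
  · intro x hx hsum
    have hconc := Real.concaveOn_rpow hα.1.le hα.2
    have hJ := hconc.le_map_sum (t := Finset.univ) (w := fun _ : Fin n => 1 / (n:ℝ))
      (p := x) (fun i _ => by positivity)
      (by simp [Finset.sum_const, Finset.card_univ]; field_simp)
      (fun i _ => hx i)
    simp only [smul_eq_mul, ← Finset.mul_sum, hsum] at hJ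
    have : (1 / (n:ℝ)) * ∑ i, x i ^ α ≤ t₀ ^ α := by
      rw [show (1 / (n:ℝ)) * xT = t₀ by rw [ht₀def]; ring] at hJ; exact hJ
    calc ∑ i, x i ^ α = (n:ℝ) * ((1 / (n:ℝ)) * ∑ i, x i ^ α) := by field_simp
      _ ≤ (n:ℝ) * t₀ ^ α := by exact mul_le_mul_of_nonneg_left this hn0.le
  · intro hcrit
    set c := ((n:ℝ) - 1) * t₀ ^ α
    set c' := ((n:ℝ) - 1) * t₀
    have hsum : t₀ + c' = xT := by
      simp only [c', ht₀def]; field_simp; ring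
    have hd1 : HasDerivAt (fun t : ℝ => t ^ α + c) (α * t₀ ^ (α - 1)) t₀ :=
      ((Real.hasDerivAt_rpow_const (Or.inl ht0.ne')).add_const c)
    have hd2 : HasDerivAt (fun t : ℝ => f (t + c')) (deriv f xT) t₀ := by
      have := ((hf (t₀ + c')).hasDerivAt).comp t₀ ((hasDerivAt_id t₀).add_const c')
      simpa [hsum, Function.comp_def] using this
    have hD : HasDerivAt (fun t : ℝ =>
        (t ^ α + c) * f (t + c'))
        (α * t₀ ^ (α - 1) * f (t₀ + c') + (t₀ ^ α + c) * deriv f xT) t₀ := hd1.mul hd2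
    rw [hD.deriv] at hcrit
    rw [hsum] at hcrit
    -- multiply by t₀ ^ (1 - α)
    have hpow1 : t₀ ^ (α - 1) * t₀ ^ (1 - α) = 1 := by
      rw [← Real.rpow_add ht0]; norm_num
    have hpow2 : t₀ ^ α * t₀ ^ (1 - α) = t₀ := by
      rw [← Real.rpow_add ht0]; norm_num
    have hmul := congrArg (fun z => z * t₀ ^ (1 - α)) hcrit
    simp only [add_mul, zero_mul] at hmul
    have h1 : α * t₀ ^ (α - 1) * f xT * t₀ ^ (1 - α) = α * f xT := by
      calc α * t₀ ^ (α - 1) * f xT * t₀ ^ (1 - α)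
          = α * f xT * (t₀ ^ (α - 1) * t₀ ^ (1 - α)) := by ring
        _ = α * f xT := by rw [hpow1, mul_one]
    have h2 : t₀ ^ α * deriv f xT * t₀ ^ (1 - α) = t₀ * deriv f xT := by
      calc t₀ ^ α * deriv f xT * t₀ ^ (1 - α)
          = (t₀ ^ α * t₀ ^ (1 - α)) * deriv f xT := by ring
        _ = t₀ * deriv f xT := by rw [hpow2]
    have h3 : c * deriv f xT * t₀ ^ (1 - α) = ((n:ℝ) - 1) * t₀ * deriv f xT := by
      simp only [c]
      calc ((n:ℝ) - 1) * t₀ ^ α * deriv f xT * t₀ ^ (1 - α)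
          = ((n:ℝ) - 1) * (t₀ ^ α * t₀ ^ (1 - α)) * deriv f xT := by ring
        _ = ((n:ℝ) - 1) * t₀ * deriv f xT := by rw [hpow2]
    rw [h1, h2, h3] at hmul
    have hnt : (n:ℝ) * t₀ = xT := by rw [ht₀def]; field_simp
    have : xT * deriv f xT = t₀ * deriv f xT + ((n:ℝ) - 1) * t₀ * deriv f xT := by
      rw [← hnt]; ring
    linarith
end
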